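/- For the append program, the derivation from goal append([X|Y], Y, [Z|Y]) produces the successive selected subgoals A_0 = append(Y,Y,Y), A_1 = append(Y1,[X1|Y1],Y1), A_2 = append(Y2,[X1,X2|Y2],Y2), and for each n the atom A_{n+1} is an expanded variant of A_n with |A_{n+1}| > |A_n|; hence this derivation satisfies the non-termination criterion. -/

import Mathlib

/-- First-order terms/atoms over function-and-predicate symbols `F` and variables `V`. -/
inductive FOTerm (F V : Type) : Type
  | var : V → FOTerm F V
  | fn : F → List (FOTerm F V) → FOTerm F V

namespace FOTerm

variable {F V : Type}

/-- Apply a variable renaming to a term. -/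
def rename (ρ : V → V) : FOTerm F V → FOTerm F V
  | var v => var (ρ v)
  | fn f ts => fn f (ts.attach.map fun t => rename ρ t.1)
  decreasing_by simp_wf; have := List.sizeOf_lt_of_mem t.2; omega

/-- The size of a term: the number of occurrences of function symbols,
variables and constants. -/
def size : FOTerm F V → ℕ
  | var _ => 1
  | fn _ ts => 1 + (ts.attach.map fun t => size t.1).sum
  decreasing_by simp_wf; have := List.sizeOf_lt_of_mem t.2; omega

/-- Two atoms are variants if an injective renaming of variables maps one to the other. -/
def IsVariant (A B : FOTerm F V) : Prop :=
  ∃ ρ : V → V, Function.Injective ρ ∧ rename ρ A = B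

/-- `Grows B A`: `B` is identical to `A` except that some subterms of `A` grow,
at the corresponding positions in `B`, into terms properly containing them. -/
inductive Grows : FOTerm F V → FOTerm F V → Prop
  | refl (t : FOTerm F V) : Grows t t
  | congr (f : F) (ts ts' : List (FOTerm F V)) (hlen : ts'.length = ts.length)
      (hargs : ∀ (i : ℕ) (hi' : i < ts'.length) (hi : i < ts.length),
        Grows (ts'.get ⟨i, hi'⟩) (ts.get ⟨i, hi⟩)) :
      Grows (fn f ts') (fn f ts)
  | grow (f : F) (ts : List (FOTerm F V)) (t t' : FOTerm F V)
      (hmem : t' ∈ ts) (h : Grows t' t) : Grows (fn f ts) t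

/-- `A'` is an expanded variant of `A` (written `A' ⊒_EV A`): after an injective
variable renaming, `A'` becomes a term that equals `A` except that some subterms
of `A` grow into terms properly containing them. -/
def EV (A' A : FOTerm F V) : Prop :=
  ∃ ρ : V → V, Function.Injective ρ ∧ Grows (rename ρ A') A

/-- Expanded variant with at least one growing term. -/
def EVStrict (A' A : FOTerm F V) : Prop :=
  ∃ ρ : V → V, Function.Injective ρ ∧ Grows (rename ρ A') A ∧ rename ρ A' ≠ A

end FOTerm
/-- Signature for STATEMENT 17: predicate `append`, list constructors. -/
inductive Sym17 : Type
  | append | cons | nil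

/-- The variable `Y_n`. -/
def yvar (n : ℕ) : ℕ := 2 * n

/-- The variable `X_n`. -/
def xvar (n : ℕ) : ℕ := 2 * n + 1

/-- The second argument `L n` of the `n`-th selected subgoal:
`L 0 = Y_0` and `L (n+1) = cons(X_{n+1}, (L n)[Y_n := Y_{n+1}])`. -/
def appList : ℕ → FOTerm Sym17 ℕ
  | 0 => .var (yvar 0)
  | n + 1 =>
      .fn .cons [.var (xvar (n + 1)),
        FOTerm.rename (Equiv.swap (yvar n) (yvar (n + 1))) (appList n)]

/-- The `n`-th selected subgoal `A_n = append(Y_n, L n, Y_n)`. -/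
def appAtom (n : ℕ) : FOTerm Sym17 ℕ :=
  .fn .append [.var (yvar n), appList n, .var (yvar n)]

namespace FOTerm

lemma rename_fn {F V : Type} (ρ : V → V) (f : F) (ts : List (FOTerm F V)) :
    rename ρ (fn f ts) = fn f (ts.map (rename ρ)) := by
  rw [rename]
  congr 1
  simp [List.map_subtype]

lemma size_fn {F V : Type} (f : F) (ts : List (FOTerm F V)) :
    size (fn f ts) = 1 + (ts.map size).sum := by
  rw [size]
  congr 1
  simp [List.map_subtype]

end FOTerm

open FOTerm

lemma rename_rename_appList (ρ σ : ℕ → ℕ) (n : ℕ) :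
    rename ρ (rename σ (appList n)) = rename (ρ ∘ σ) (appList n) := by
  induction n generalizing ρ σ with
  | zero => simp [appList, rename]
  | succ n ih =>
      simp only [appList, rename_fn, List.map, rename, ih, Function.comp_def]

lemma size_rename_appList (ρ : ℕ → ℕ) (n : ℕ) :
    size (rename ρ (appList n)) = size (appList n) := by
  induction n generalizing ρ with
  | zero => simp [appList, rename, size]
  | succ n ih =>
      simp only [appList, rename_fn, List.map, rename, rename_rename_appList,
        size_fn, List.sum_cons, List.sum_nil, size]
      rw [ih, ih]

lemma rename_id_appList (ρ : ℕ → ℕ) (h : ∀ v, ρ v = v) (n : ℕ) :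
    rename ρ (appList n) = appList n := by
  induction n with
  | zero => simp [appList, rename, h]
  | succ n ih =>
      simp only [appList, rename_fn, List.map, rename, rename_rename_appList, h]
      congr 1
      simp only [List.cons.injEq, and_true, true_and]
      have : ρ ∘ (Equiv.swap (yvar n) (yvar (n+1))) = Equiv.swap (yvar n) (yvar (n+1)) := by
        funext v; simp [h]
      rw [this]

/-- the chain of selected subgoals for `append([X|Y],Y,[Z|Y])`
starts with `append(Y,Y,Y)` and each `A_{n+1}` is an expanded variant of `A_n`
with strictly larger size, so the non-termination criterion is satisfied. -/
theorem append_nontermination_chain :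
    appAtom 0 = .fn .append [.var (yvar 0), .var (yvar 0), .var (yvar 0)] ∧
    ∀ n, FOTerm.EV (appAtom (n + 1)) (appAtom n) ∧
      (appAtom n).size < (appAtom (n + 1)).size := by
  constructor
  · simp [appAtom, appList]
  · intro n
    set ρ : ℕ → ℕ := ⇑(Equiv.swap (yvar n) (yvar (n+1))) with hρ
    have hinj : Function.Injective ρ := (Equiv.swap _ _).injective
    have hx : ρ (xvar (n+1)) = xvar (n+1) := by
      apply Equiv.swap_apply_of_ne_of_ne <;> simp [xvar, yvar] <;> omega
    have hy : ρ (yvar (n+1)) = yvar n := Equiv.swap_apply_right _ _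
    have hrr : rename ρ (rename ρ (appList n)) = appList n := by
      rw [rename_rename_appList]
      apply rename_id_appList
      intro v; simp [hρ]
    have hA : rename ρ (appAtom (n+1)) =
        .fn .append [.var (yvar n), .fn .cons [.var (xvar (n+1)), appList n], .var (yvar n)] := by
      simp only [appAtom, appList, rename_fn, List.map, rename, hx, hy, ← hρ, hrr]
    constructor
    · refine ⟨ρ, hinj, ?_⟩
      rw [hA]
      refine Grows.congr _ _ _ rfl ?_
      intro i hi' hi
      match i with
      | 0 => exact Grows.refl _
      | 1 =>
          exact Grows.grow _ _ _ _ (by simp) (Grows.refl _)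
      | 2 => exact Grows.refl _
      | (k+3) => simp at hi
    · have hs : ∀ m, size (appAtom m) = 3 + size (appList m) := by
        intro m
        simp [appAtom, size_fn, size]
        omega
      rw [hs, hs]
      simp only [appList, size_fn, List.map, List.sum_cons, List.sum_nil, size,
        size_rename_appList]
      omega
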